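/- For every positive integer n, M(n) ≥ 2^(n−1). -/

import Mathlib

/-- A finite sequence (list) of naturals contains a 3-term arithmetic progression
as a subsequence: there are indices `i < j < k` with `a i + a k = 2 * a j`,
equivalently some sublist `[x, y, z]` with `x + z = 2 * y`. -/
def Has3AP (l : List ℕ) : Prop :=
  ∃ x y z : ℕ, [x, y, z].Sublist l ∧ x + z = 2 * y

/-- `M n` is the number of 3AP-free permutations of `{1, 2, ..., n}`. -/
noncomputable def M (n : ℕ) : ℕ :=
  Nat.card {l : List ℕ // l.Perm (List.range' 1 n) ∧ ¬ Has3AP l}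

namespace AP3Aux

abbrev A (n : ℕ) := {l : List ℕ // l.Perm (List.range' 1 n) ∧ ¬ Has3AP l}

instance finA (n : ℕ) : Finite (A n) := by
  have h : {l : List ℕ | l.Perm (List.range' 1 n) ∧ ¬ Has3AP l} ⊆
      {l | l ∈ (List.range' 1 n).permutations} := fun l hl =>
    List.mem_permutations.2 hl.1
  exact Set.Finite.to_subtype (Set.Finite.subset (List.finite_toSet _) h)

/-- the even block followed by the odd block is a permutation of `range' 1 n` -/
lemma perm_split (n : ℕ) :
    ((List.range' 1 (n / 2)).map (fun x => 2 * x) ++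
      (List.range' 1 ((n + 1) / 2)).map (fun x => 2 * x - 1)).Perm (List.range' 1 n) := by
  apply List.perm_of_nodup_nodup_toFinset_eq
  · apply List.Nodup.append
    · exact (List.nodup_range').map (fun x y h => by omega)
    · exact (List.nodup_range').map (fun x y h => by omega)
    · intro k hk hk'
      simp only [List.mem_map, List.mem_range'_1] at hk hk'
      obtain ⟨x, hx, rfl⟩ := hk
      obtain ⟨y, hy, h⟩ := hk'
      omega
  · exact List.nodup_range'
  · ext k
    simp only [List.mem_toFinset, List.mem_append, List.mem_map, List.mem_range'_1]
    constructor
    · rintro (⟨x, hx, rfl⟩ | ⟨x, hx, rfl⟩) <;> omega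
    · rintro ⟨h1, h2⟩
      rcases Nat.even_or_odd k with ⟨x, hx⟩ | ⟨x, hx⟩
      · exact Or.inl ⟨x, by omega, by omega⟩
      · exact Or.inr ⟨x + 1, by omega, by omega⟩

lemma has3AP_of_map_even {l : List ℕ} (h : Has3AP (l.map (fun x => 2 * x))) : Has3AP l := by
  obtain ⟨x, y, z, hs, he⟩ := h
  obtain ⟨l', hl', heq⟩ := List.sublist_map_iff.1 hs
  rcases l' with _ | ⟨a, _ | ⟨b, _ | ⟨c, _ | ⟨d, l'⟩⟩⟩⟩ <;> simp_all
  obtain ⟨rfl, rfl, rfl⟩ := heq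
  exact ⟨a, b, c, hl', by omega⟩

lemma has3AP_of_map_odd {l : List ℕ} (hpos : ∀ x ∈ l, 1 ≤ x)
    (h : Has3AP (l.map (fun x => 2 * x - 1))) : Has3AP l := by
  obtain ⟨x, y, z, hs, he⟩ := h
  obtain ⟨l', hl', heq⟩ := List.sublist_map_iff.1 hs
  rcases l' with _ | ⟨a, _ | ⟨b, _ | ⟨c, _ | ⟨d, l'⟩⟩⟩⟩ <;> simp_all
  obtain ⟨rfl, rfl, rfl⟩ := heq
  have ha := hpos a (hl'.subset (by simp))
  have hb := hpos b (hl'.subset (by simp))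
  have hc := hpos c (hl'.subset (by simp))
  exact ⟨a, b, c, hl', by omega⟩

lemma not_has3AP_append {E O : List ℕ}
    (hpar : ∀ x ∈ E, ∀ z ∈ O, x % 2 ≠ z % 2)
    (hE : ¬ Has3AP E) (hO : ¬ Has3AP O) : ¬ Has3AP (E ++ O) := by
  rintro ⟨x, y, z, hs, he⟩
  rw [List.sublist_append_iff] at hs
  obtain ⟨l1, l2, heq, h1, h2⟩ := hs
  rcases l1 with _ | ⟨p, _ | ⟨q, _ | ⟨r, l1⟩⟩⟩ <;>
    simp only [List.nil_append, List.cons_append, List.cons.injEq] at heq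
  · subst heq
    exact hO ⟨x, y, z, h2, he⟩
  · obtain ⟨rfl, rfl⟩ := heq
    have hx : x ∈ E := h1.subset (by simp)
    have hz : z ∈ O := h2.subset (by simp)
    have := hpar x hx z hz
    omega
  · obtain ⟨rfl, rfl, rfl⟩ := heq
    have hx : x ∈ E := h1.subset (by simp)
    have hz : z ∈ O := h2.subset (by simp)
    have := hpar x hx z hz
    omega
  · obtain ⟨rfl, rfl, rfl, hnil⟩ := heq
    obtain ⟨rfl, rfl⟩ := List.append_eq_nil_iff.1 hnil.symm
    exact hE ⟨x, y, z, by simpa using h1, he⟩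

end AP3Aux

open AP3Aux in
/-- For every positive integer `n`, `M n ≥ 2 ^ (n - 1)`. -/
theorem M_ge_two_pow (n : ℕ) (hn : 0 < n) : 2 ^ (n - 1) ≤ M n := by
  induction n using Nat.strong_induction_on with
  | _ n ih =>
  rcases n with _ | _ | n
  · omega
  · -- n = 1
    have hne : Nonempty (A 1) := by
      refine ⟨⟨[1], by simp [List.range'], ?_⟩⟩
      rintro ⟨x, y, z, hs, -⟩
      have := hs.length_le
      simp at this
    exact Nat.card_pos (α := A 1)
  · -- n + 2
    set a : ℕ := (n + 2) / 2 with ha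
    set b : ℕ := (n + 3) / 2 with hb
    have hab : a + b = n + 2 := by omega
    have ha1 : 1 ≤ a := by omega
    have hb1 : 1 ≤ b := by omega
    have iha := ih a (by omega) (by omega)
    have ihb := ih b (by omega) (by omega)
    -- parity facts
    have evenpar : ∀ (l : List ℕ), ∀ x ∈ l.map (fun x => 2 * x), x % 2 = 0 := by
      intro l x hx; simp only [List.mem_map] at hx; obtain ⟨y, -, rfl⟩ := hx; omega
    have oddpar : ∀ (m : List ℕ), (∀ x ∈ m, 1 ≤ x) →
        ∀ x ∈ m.map (fun x => 2 * x - 1), x % 2 = 1 := by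
      intro m hm x hx; simp only [List.mem_map] at hx; obtain ⟨y, hy, rfl⟩ := hx
      have := hm y hy; omega
    have mempos : ∀ (k : ℕ) (m : List ℕ), m.Perm (List.range' 1 k) → ∀ x ∈ m, 1 ≤ x := by
      intro k m hm x hx
      have := hm.subset hx
      rw [List.mem_range'_1] at this
      omega
    -- the two building blocks
    have buildPerm : ∀ (l m : List ℕ), l.Perm (List.range' 1 a) → m.Perm (List.range' 1 b) →
        (l.map (fun x => 2 * x) ++ m.map (fun x => 2 * x - 1)).Perm (List.range' 1 (n + 2)) := by
      intro l m hl hm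
      have := (hl.map (fun x => 2 * x)).append (hm.map (fun x => 2 * x - 1))
      refine this.trans ?_
      have := perm_split (n + 2)
      have h2 : (n + 2) / 2 = a := rfl
      have h3 : (n + 2 + 1) / 2 = b := by omega
      rwa [h2, h3] at this
    have buildAP : ∀ (l m : List ℕ), m.Perm (List.range' 1 b) → ¬ Has3AP l → ¬ Has3AP m →
        ¬ Has3AP (l.map (fun x => 2 * x) ++ m.map (fun x => 2 * x - 1)) := by
      intro l m hm hl3 hm3
      apply not_has3AP_append
      · intro x hx z hz
        have := evenpar l x hx
        have := oddpar m (mempos b m hm) z hz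
        omega
      · intro h; exact hl3 (has3AP_of_map_even h)
      · intro h; exact hm3 (has3AP_of_map_odd (mempos b m hm) h)
    have buildAP' : ∀ (l m : List ℕ), m.Perm (List.range' 1 b) → ¬ Has3AP l → ¬ Has3AP m →
        ¬ Has3AP (m.map (fun x => 2 * x - 1) ++ l.map (fun x => 2 * x)) := by
      intro l m hm hl3 hm3
      apply not_has3AP_append
      · intro x hx z hz
        have := oddpar m (mempos b m hm) x hx
        have := evenpar l z hz
        omega
      · intro h; exact hm3 (has3AP_of_map_odd (mempos b m hm) h)
      · intro h; exact hl3 (has3AP_of_map_even h)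
    -- the injection
    let Φ : Bool × A a × A b → A (n + 2) := fun p =>
      match p.1 with
      | false =>
        ⟨p.2.1.1.map (fun x => 2 * x) ++ p.2.2.1.map (fun x => 2 * x - 1),
          buildPerm _ _ p.2.1.2.1 p.2.2.2.1,
          buildAP _ _ p.2.2.2.1 p.2.1.2.2 p.2.2.2.2⟩
      | true =>
        ⟨p.2.2.1.map (fun x => 2 * x - 1) ++ p.2.1.1.map (fun x => 2 * x),
          ((buildPerm _ _ p.2.1.2.1 p.2.2.2.1).symm.trans List.perm_append_comm).symm,
          buildAP' _ _ p.2.2.2.1 p.2.1.2.2 p.2.2.2.2⟩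
    have lenl : ∀ (k : ℕ) (l : List ℕ), l.Perm (List.range' 1 k) → l.length = k := by
      intro k l hl; simpa using hl.length_eq
    have hΦ : Function.Injective Φ := by
      rintro ⟨i, ⟨l, hl, hl3⟩, ⟨m, hm, hm3⟩⟩ ⟨j, ⟨l', hl', hl3'⟩, ⟨m', hm', hm3'⟩⟩ h
      -- analyze cases on i, j
      have hinjE : Function.Injective (fun x : ℕ => 2 * x) := fun x y h => by
        simp only at h; omega
      have hinjO : Function.Injective (fun x : ℕ => 2 * x - 1) := fun x y h => by
        simp only at h; omega
      have hllen : l.length = a := lenl a l hl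
      have hllen' : l'.length = a := lenl a l' hl'
      have hmlen : m.length = b := lenl b m hm
      have hmlen' : m'.length = b := lenl b m' hm'
      -- l, l', m, m' nonempty
      have hlne : l ≠ [] := by intro h; rw [h] at hllen; simp at hllen; omega
      have hmne' : m' ≠ [] := by intro h; rw [h] at hmlen'; simp at hmlen'; omega
      have hlne' : l' ≠ [] := by intro h; rw [h] at hllen'; simp at hllen'; omega
      have hmne : m ≠ [] := by intro h; rw [h] at hmlen; simp at hmlen; omega
      cases i <;> cases j <;> simp only [Φ, Subtype.mk.injEq] at h
      · -- both evens first
        obtain ⟨h1, h2⟩ := List.append_inj h (by simp [hllen, hllen'])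
        have : l = l' := List.map_injective_iff.2 hinjE h1
        have : m = m' := List.map_injective_iff.2 hinjO h2
        simp_all
      · -- i = 0, j = 1 : contradiction via head parity
        exfalso
        rcases l with _ | ⟨x, l⟩; · exact hlne rfl
        rcases m' with _ | ⟨y, m'⟩; · exact hmne' rfl
        simp only [List.map_cons, List.cons_append, List.cons.injEq] at h
        have hy1 : 1 ≤ y := mempos b _ hm' y (by simp)
        obtain ⟨h0, -⟩ := h
        omega
      · exfalso
        rcases l' with _ | ⟨x, l'⟩; · exact hlne' rfl
        rcases m with _ | ⟨y, m⟩; · exact hmne rfl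
        simp only [List.map_cons, List.cons_append, List.cons.injEq] at h
        have hy1 : 1 ≤ y := mempos b _ hm y (by simp)
        obtain ⟨h0, -⟩ := h
        omega
      · obtain ⟨h1, h2⟩ := List.append_inj h (by simp [hmlen, hmlen'])
        have : m = m' := List.map_injective_iff.2 hinjO h1
        have : l = l' := List.map_injective_iff.2 hinjE h2
        simp_all
    have hcard : Nat.card (Bool × A a × A b) ≤ M (n + 2) :=
      Nat.card_le_card_of_injective Φ hΦ
    have hprod : Nat.card (Bool × A a × A b) = 2 * (Nat.card (A a) * Nat.card (A b)) := by
      rw [Nat.card_prod, Nat.card_prod]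
      simp [Nat.card_eq_fintype_card]
    have hMa : 2 ^ (a - 1) ≤ Nat.card (A a) := iha
    have hMb : 2 ^ (b - 1) ≤ Nat.card (A b) := ihb
    have key : 2 ^ (n + 2 - 1) ≤ 2 * (Nat.card (A a) * Nat.card (A b)) := by
      have hexp : 2 ^ (n + 2 - 1) = 2 * (2 ^ (a - 1) * 2 ^ (b - 1)) := by
        rw [← pow_add, ← pow_succ']
        congr 1
        omega
      rw [hexp]
      exact Nat.mul_le_mul_left 2 (Nat.mul_le_mul hMa hMb)
    calc 2 ^ (n + 2 - 1) ≤ 2 * (Nat.card (A a) * Nat.card (A b)) := key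
      _ = Nat.card (Bool × A a × A b) := hprod.symm
      _ ≤ M (n + 2) := hcard
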